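/- Let G be a triangle-free graph (girth at least 4, or no cycles at all) with m edges and spectral radius μ. Then μ² ≤ m. -/

import Mathlib

/-- `μ` is the largest eigenvalue (spectral radius) of the adjacency matrix of `G`. -/
def IsSpectralRadius {V : Type*} [Fintype V] [DecidableEq V] (G : SimpleGraph V)
    [DecidableRel G.Adj] (μ : ℝ) : Prop :=
  Module.End.HasEigenvalue (Matrix.toLin' (G.adjMatrix ℝ)) μ ∧
    ∀ x : ℝ, Module.End.HasEigenvalue (Matrix.toLin' (G.adjMatrix ℝ)) x → x ≤ μ

theorem stmt1 {V : Type*} [Fintype V] [DecidableEq V] (G : SimpleGraph V)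
    [DecidableRel G.Adj] (μ : ℝ) (hμ : IsSpectralRadius G μ)
    (htf : G.CliqueFree 3) :
    μ ^ 2 ≤ (G.edgeFinset.card : ℝ) := by
  classical
  obtain ⟨x, hx⟩ := hμ.1.exists_hasEigenvector
  have hAx : (G.adjMatrix ℝ).mulVec x = μ • x := by
    have := hx.apply_eq_smul
    simpa [Matrix.toLin'_apply] using this
  obtain ⟨v₀, hv₀⟩ := Function.ne_iff.mp hx.right
  haveI : Nonempty V := ⟨v₀⟩
  obtain ⟨u, -, hu⟩ := Finset.exists_max_image Finset.univ (fun v => |x v|)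
    ⟨v₀, Finset.mem_univ _⟩
  set y : V → ℝ := if 0 ≤ x u then x else -x with hy
  have hAy : (G.adjMatrix ℝ).mulVec y = μ • y := by
    rw [hy]; split
    · exact hAx
    · rw [Matrix.mulVec_neg, hAx, smul_neg]
  have hyu : y u = |x u| := by
    rw [hy]; split
    · exact (abs_of_nonneg ‹_›).symm
    · simp [abs_of_neg (not_le.mp ‹_›)]
  have hyub : ∀ w, |y w| ≤ y u := by
    intro w
    have : |y w| = |x w| := by rw [hy]; split <;> simp
    rw [this, hyu]; exact hu w (Finset.mem_univ w)
  have hypos : 0 < y u := by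
    rw [hyu]
    have hv₀' : x v₀ ≠ 0 := by simpa using hv₀
    exact lt_of_lt_of_le (abs_pos.mpr hv₀') (hu v₀ (Finset.mem_univ _))
  have hrow : ∀ v, ∑ w, (G.adjMatrix ℝ) v w * y w = μ * y v := by
    intro v
    have := congrFun hAy v
    simpa [Matrix.mulVec, dotProduct] using this
  have key : μ ^ 2 * y u = ∑ v, ∑ w, (G.adjMatrix ℝ) u v * ((G.adjMatrix ℝ) v w * y w) := by
    have : ∀ v, ∑ w, (G.adjMatrix ℝ) u v * ((G.adjMatrix ℝ) v w * y w)
        = (G.adjMatrix ℝ) u v * (μ * y v) := by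
      intro v; rw [← Finset.mul_sum, hrow v]
    rw [Finset.sum_congr rfl (fun v _ => this v)]
    have h2 : ∑ v, (G.adjMatrix ℝ) u v * (μ * y v) = μ * ∑ v, (G.adjMatrix ℝ) u v * y v := by
      rw [Finset.mul_sum]; congr 1; ext v; ring
    rw [h2, hrow u]; ring
  set P : Finset (V × V) :=
    Finset.univ.filter (fun p : V × V => G.Adj u p.1 ∧ G.Adj p.1 p.2) with hP
  have keyP : μ ^ 2 * y u = ∑ p ∈ P, y p.2 := by
    rw [key, ← Finset.sum_product']
    rw [hP, Finset.sum_filter]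
    apply Finset.sum_congr rfl
    intro p _
    by_cases h1 : G.Adj u p.1 <;> by_cases h2 : G.Adj p.1 p.2 <;>
      simp [h1, h2]
  have hsum_le : ∑ p ∈ P, y p.2 ≤ P.card * y u := by
    calc ∑ p ∈ P, y p.2 ≤ ∑ p ∈ P, y u :=
          Finset.sum_le_sum (fun p _ => (le_abs_self _).trans (hyub p.2))
      _ = P.card * y u := by rw [Finset.sum_const, nsmul_eq_mul]
  have hcard : P.card ≤ G.edgeFinset.card := by
    refine Finset.card_le_card_of_injOn (s := P) (t := G.edgeFinset) (fun p => Sym2.mk p.1 p.2) ?_ ?_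
    · intro p hp
      rw [Finset.mem_coe, hP, Finset.mem_filter] at hp
      rw [Finset.mem_coe, SimpleGraph.mem_edgeFinset]
      exact hp.2.2
    · intro p hp q hq hpq
      rw [hP] at hp hq
      rw [Finset.coe_filter, Set.mem_setOf_eq] at hp hq
      simp only [Sym2.mk_eq_mk_iff, Sym2.rel_iff', Prod.mk.injEq, Prod.swap_prod_mk] at hpq
      rcases hpq with h | h
      · exact h
      · exfalso
        obtain ⟨h1, h2⟩ : p.1 = q.2 ∧ p.2 = q.1 := by
          rw [h]; exact ⟨rfl, rfl⟩
        have hq1 : G.Adj u q.1 := hq.2.1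
        have hq2 : G.Adj u q.2 := h1 ▸ hp.2.1
        have hq12 : G.Adj q.1 q.2 := hq.2.2
        exact htf {u, q.1, q.2} (SimpleGraph.is3Clique_triple_iff.mpr ⟨hq1, hq2, hq12⟩)
  have : μ ^ 2 * y u ≤ (G.edgeFinset.card : ℝ) * y u := by
    rw [keyP]
    refine hsum_le.trans ?_
    exact mul_le_mul_of_nonneg_right (Nat.cast_le.mpr hcard) hypos.le
  exact le_of_mul_le_mul_right this hypos
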